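/- Deterministic core of Theorem 2.1: Let K : (0,∞) → ℝ be continuous and locally square-integrable on [0,∞), let b₀, β, λ ∈ ℝ, and let D ⊆ ℝ be a nonempty set. Let E : (0,∞) → ℝ be continuous and locally square-integrable, satisfying the linear Volterra equation E(t) = K(t) + β ∫₀ᵗ K(t−s) E(s) ds for all t > 0, and define E₁(T) := 1 + β ∫₀ᵀ e^{λs} E(s) ds for T ≥ 0. Assume that for all x ∈ D and all 0 < t < T one has e^{−λT} E₁(T) x + b₀ ∫₀ᵀ E(s) ds = e^{−λT} E₁(T−t) E₁(t) x + b₀ e^{−λ(T−t)} E₁(T−t) ∫₀ᵗ E(s) ds + b₀ ∫₀^{T−t} E(s) ds. Assume moreover: (b₀ ≠ 0 or β ≠ 0); if b₀ = 0 and β ≠ 0 then D contains a nonzero element; if b₀ ≠ 0, β ≠ 0 and λ = 0 then 0 ∈ D; if b₀ ≠ 0, β ≠ 0 and λ ≠ 0 then −b₀/β ∈ D. Then there exists c ∈ ℝ such that K(t) = c e^{−λt} for all t > 0. -/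

import Mathlib

open MeasureTheory Set Filter intervalIntegral

lemma my_int_L1 {f : ℝ → ℝ} (hc : ContinuousOn f (Set.Ioi 0))
    (hL2 : ∀ T > 0, MeasureTheory.IntegrableOn (fun s => (f s) ^ 2) (Set.Ioc 0 T))
    {T : ℝ} (hT : 0 < T) : MeasureTheory.IntegrableOn f (Set.Ioc 0 T) := by
  have hmeas : AEStronglyMeasurable f (volume.restrict (Set.Ioc 0 T)) :=
    (hc.mono Set.Ioc_subset_Ioi_self).aestronglyMeasurable measurableSet_Ioc
  have hg : MeasureTheory.IntegrableOn (fun s => ((f s) ^ 2 + 1) / 2) (Set.Ioc 0 T) :=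
    ((hL2 T hT).add (integrableOn_const (by simp))).div_const 2
  refine hg.integrable.mono' hmeas (Filter.Eventually.of_forall fun s => ?_)
  have h1 : ‖f s‖ = |f s| := rfl
  rw [h1]
  nlinarith [sq_nonneg (|f s| - 1), sq_abs (f s), abs_nonneg (f s)]

lemma my_int_mul_exp {f : ℝ → ℝ} (hc : ContinuousOn f (Set.Ioi 0))
    (hL2 : ∀ T > 0, MeasureTheory.IntegrableOn (fun s => (f s) ^ 2) (Set.Ioc 0 T))
    (c : ℝ) {T : ℝ} (hT : 0 < T) :
    MeasureTheory.IntegrableOn (fun s => f s * Real.exp (c * s)) (Set.Ioc 0 T) := by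
  have hmeas : AEStronglyMeasurable (fun s => f s * Real.exp (c * s))
      (volume.restrict (Set.Ioc 0 T)) :=
    ((hc.mono Set.Ioc_subset_Ioi_self).mul
      ((Real.continuous_exp.comp (continuous_const.mul continuous_id)).continuousOn)).aestronglyMeasurable
      measurableSet_Ioc
  have hg : MeasureTheory.IntegrableOn (fun s => Real.exp (|c| * T) * |f s|) (Set.Ioc 0 T) :=
    ((my_int_L1 hc hL2 hT).abs).const_mul _
  refine hg.integrable.mono' hmeas ?_
  rw [MeasureTheory.ae_restrict_iff' measurableSet_Ioc]
  refine Filter.Eventually.of_forall fun s hs => ?_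
  have h1 : Real.exp (c * s) ≤ Real.exp (|c| * T) := by
    apply Real.exp_le_exp.2
    calc c * s ≤ |c * s| := le_abs_self _
    _ = |c| * |s| := abs_mul _ _
    _ ≤ |c| * T := by
        apply mul_le_mul_of_nonneg_left _ (abs_nonneg c)
        rw [abs_of_pos hs.1]; exact hs.2
  have : ‖f s * Real.exp (c * s)‖ = |f s| * Real.exp (c * s) := by
    rw [Real.norm_eq_abs, abs_mul, abs_of_pos (Real.exp_pos _)]
  rw [this]
  calc |f s| * Real.exp (c * s) ≤ |f s| * Real.exp (|c| * T) :=
        mul_le_mul_of_nonneg_left h1 (abs_nonneg _)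
    _ = Real.exp (|c| * T) * |f s| := mul_comm _ _

lemma my_prim_deriv {f : ℝ → ℝ} (hc : ContinuousOn f (Set.Ioi 0))
    (hint : ∀ T > 0, MeasureTheory.IntegrableOn f (Set.Ioc 0 T))
    {t : ℝ} (ht : 0 < t) :
    HasDerivAt (fun u => ∫ s in (0:ℝ)..u, f s) (f t) t := by
  apply intervalIntegral.integral_hasDerivAt_right
  · rw [intervalIntegrable_iff_integrableOn_Ioc_of_le ht.le]
    exact hint t ht
  · exact hc.stronglyMeasurableAtFilter isOpen_Ioi t ht
  · exact hc.continuousAt (Ioi_mem_nhds ht)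

lemma my_prim_tendsto {f : ℝ → ℝ}
    (hint : ∀ T > 0, MeasureTheory.IntegrableOn f (Set.Ioc 0 T)) :
    Filter.Tendsto (fun u => ∫ s in (0:ℝ)..u, f s) (nhdsWithin 0 (Set.Ioi 0)) (nhds 0) := by
  have h1 : MeasureTheory.IntegrableOn f (Set.uIcc 0 1) := by
    rw [Set.uIcc_of_le (by norm_num : (0:ℝ) ≤ 1), integrableOn_Icc_iff_integrableOn_Ioc]
    exact hint 1 one_pos
  have h2 : ContinuousOn (fun u => ∫ s in (0:ℝ)..u, f s) (Set.uIcc 0 1) :=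
    intervalIntegral.continuousOn_primitive_interval h1
  have h3 : ContinuousWithinAt (fun u => ∫ s in (0:ℝ)..u, f s) (Set.uIcc 0 1) 0 :=
    h2 0 (by rw [Set.uIcc_of_le (by norm_num : (0:ℝ) ≤ 1)]; exact ⟨le_refl _, by norm_num⟩)
  have h4 : Filter.Tendsto (fun u => ∫ s in (0:ℝ)..u, f s)
      (nhdsWithin 0 (Set.uIcc 0 1)) (nhds 0) := by
    have : (∫ s in (0:ℝ)..(0:ℝ), f s) = 0 := intervalIntegral.integral_same
    simpa [ContinuousWithinAt, this] using h3
  apply h4.mono_left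
  rw [Set.uIcc_of_le (by norm_num : (0:ℝ) ≤ 1)]
  rw [← nhdsWithin_Ioo_eq_nhdsGT (by norm_num : (0:ℝ) < 1)]
  exact nhdsWithin_mono 0 Set.Ioo_subset_Icc_self

lemma my_volterra_exp {K E : ℝ → ℝ} {β lam μ c₁ : ℝ}
    (hKc : ContinuousOn K (Set.Ioi 0))
    (hKL2 : ∀ T > 0, MeasureTheory.IntegrableOn (fun s => (K s) ^ 2) (Set.Ioc 0 T))
    (hβc : β * c₁ = μ + lam)
    (hEexp : ∀ s > 0, E s = c₁ * Real.exp (μ * s))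
    (hVolt : ∀ t > 0, E t = K t + β * ∫ s in (0:ℝ)..t, K (t - s) * E s) :
    ∀ t > 0, K t = c₁ * Real.exp (-lam * t) := by
  set f : ℝ → ℝ := fun u => K u * Real.exp (-μ * u) with hf
  have hfc : ContinuousOn f (Set.Ioi 0) :=
    hKc.mul (Real.continuous_exp.comp (continuous_const.mul continuous_id)).continuousOn
  have hfint : ∀ T > 0, MeasureTheory.IntegrableOn f (Set.Ioc 0 T) :=
    fun T hT => my_int_mul_exp hKc hKL2 (-μ) hT
  set P : ℝ → ℝ := fun t => ∫ s in (0:ℝ)..t, f s with hP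
  have hP' : ∀ t > 0, HasDerivAt P (f t) t := fun t ht => my_prim_deriv hfc hfint ht
  have hP0 : Filter.Tendsto P (nhdsWithin 0 (Set.Ioi 0)) (nhds 0) := my_prim_tendsto hfint
  have key : ∀ t > 0, K t = c₁ * Real.exp (μ * t) * (1 - β * P t) := by
    intro t ht
    have hv := hVolt t ht
    have h1 : (∫ s in (0:ℝ)..t, K (t - s) * E s)
        = ∫ u in (0:ℝ)..t, K u * E (t - u) := by
      have h := intervalIntegral.integral_comp_sub_left
        (a := 0) (b := t) (fun u => K u * E (t - u)) t
      simp only [sub_sub_cancel, sub_zero, sub_self] at h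
      exact h
    have h2 : (∫ u in (0:ℝ)..t, K u * E (t - u))
        = ∫ u in (0:ℝ)..t, (c₁ * Real.exp (μ * t)) * f u := by
      rw [intervalIntegral.integral_of_le ht.le, intervalIntegral.integral_of_le ht.le,
        MeasureTheory.integral_Ioc_eq_integral_Ioo, MeasureTheory.integral_Ioc_eq_integral_Ioo]
      apply MeasureTheory.setIntegral_congr_fun measurableSet_Ioo
      intro u hu
      have hE : E (t - u) = c₁ * Real.exp (μ * (t - u)) := hEexp _ (by simp [hu.2])
      have hx : Real.exp (μ * (t - u)) = Real.exp (μ * t) * Real.exp (-μ * u) := by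
        rw [← Real.exp_add]; ring_nf
      simp only [hf]
      rw [hE, hx]; ring
    have h3 : (∫ u in (0:ℝ)..t, (c₁ * Real.exp (μ * t)) * f u)
        = c₁ * Real.exp (μ * t) * P t := intervalIntegral.integral_const_mul _ _
    rw [h1, h2, h3, hEexp t ht] at hv
    linear_combination -hv
  set Q : ℝ → ℝ := fun t => (1 - β * P t) * Real.exp (β * c₁ * t) with hQ
  have hQ' : ∀ t > 0, HasDerivAt Q 0 t := by
    intro t ht
    have h1 : HasDerivAt (fun u => 1 - β * P u) (-(β * f t)) t := by
      simpa using ((hP' t ht).const_mul β).const_sub 1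
    have h2 : HasDerivAt (fun u => Real.exp (β * c₁ * u))
        (Real.exp (β * c₁ * t) * (β * c₁)) t := by
      have hlin : HasDerivAt (fun u : ℝ => β * c₁ * u) (β * c₁) t := by
        simpa using (hasDerivAt_id t).const_mul (β * c₁)
      simpa using hlin.exp
    have h3 := h1.mul h2
    have hft : f t = c₁ * (1 - β * P t) := by
      show K t * Real.exp (-μ * t) = _
      rw [key t ht]
      have hx : Real.exp (μ * t) * Real.exp (-μ * t) = 1 := by
        rw [← Real.exp_add]; ring_nf; exact Real.exp_zero
      calc c₁ * Real.exp (μ * t) * (1 - β * P t) * Real.exp (-μ * t)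
          = c₁ * (1 - β * P t) * (Real.exp (μ * t) * Real.exp (-μ * t)) := by ring
        _ = c₁ * (1 - β * P t) := by rw [hx, mul_one]
    refine h3.congr_deriv ?_
    rw [hft]; ring
  have hQ0 : Filter.Tendsto Q (nhdsWithin 0 (Set.Ioi 0)) (nhds 1) := by
    have h1 : Filter.Tendsto (fun u => 1 - β * P u) (nhdsWithin 0 (Set.Ioi 0)) (nhds 1) := by
      have := (hP0.const_mul β).const_sub 1
      simpa using this
    have h2 : Filter.Tendsto (fun u => Real.exp (β * c₁ * u))
        (nhdsWithin 0 (Set.Ioi 0)) (nhds 1) := by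
      have hcont : Continuous fun u : ℝ => Real.exp (β * c₁ * u) :=
        Real.continuous_exp.comp (continuous_const.mul continuous_id)
      have := (hcont.tendsto 0).mono_left (nhdsWithin_le_nhds (s := Set.Ioi (0:ℝ)))
      simpa using this
    simpa using h1.mul h2
  have hQconst : ∀ t > 0, Q t = 1 := by
    have key2 : ∀ a b : ℝ, 0 < a → a ≤ b → Q b = Q a := by
      intro a b ha hab
      have hcont : ContinuousOn Q (Set.Icc a b) := fun x hx =>
        ((hQ' x (lt_of_lt_of_le ha hx.1)).continuousAt).continuousWithinAt
      exact constant_of_has_deriv_right_zero hcont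
        (fun x hx => (hQ' x (lt_of_lt_of_le ha hx.1)).hasDerivWithinAt) b ⟨hab, le_refl b⟩
    intro t ht
    have hev : ∀ᶠ u in nhdsWithin 0 (Set.Ioi 0), Q u = Q t := by
      filter_upwards [Ioc_mem_nhdsGT ht] with u hu
      exact (key2 u t hu.1 hu.2).symm
    have h1 : Filter.Tendsto Q (nhdsWithin 0 (Set.Ioi 0)) (nhds (Q t)) :=
      Filter.Tendsto.congr' (hev.mono fun u hu => hu.symm) tendsto_const_nhds
    exact tendsto_nhds_unique h1 hQ0
  intro t ht
  rw [key t ht]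
  have h1 : 1 - β * P t = Real.exp (-(β * c₁ * t)) := by
    have hq := hQconst t ht
    rw [Real.exp_neg]
    exact eq_inv_of_mul_eq_one_left hq
  rw [h1, mul_assoc, ← Real.exp_add]
  have : μ * t + -(β * c₁ * t) = -lam * t := by rw [hβc]; ring
  rw [this]
lemma my_mult_exp {F D : ℝ → ℝ} (hF' : ∀ t > 0, HasDerivAt F (D t) t)
    (hmul : ∀ s > 0, ∀ t > 0, F (s + t) = F s * F t)
    (hlim : Filter.Tendsto F (nhdsWithin 0 (Set.Ioi 0)) (nhds 1)) :
    ∃ μ : ℝ, ∀ t > 0, F t = Real.exp (μ * t) := by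
  -- nonvanishing
  have hnz : ∀ t > 0, F t ≠ 0 := by
    intro t₀ ht₀ h0
    have key : ∀ n : ℕ, F (t₀ / 2 ^ n) = 0 := by
      intro n
      induction n with
      | zero => simpa using h0
      | succ n ih =>
        have hpos : 0 < t₀ / 2 ^ (n + 1) := by positivity
        have : t₀ / 2 ^ n = t₀ / 2 ^ (n + 1) + t₀ / 2 ^ (n + 1) := by ring
        rw [this, hmul _ hpos _ hpos] at ih
        exact mul_self_eq_zero.mp ih
    have hseq : Filter.Tendsto (fun n : ℕ => t₀ / 2 ^ n) Filter.atTop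
        (nhdsWithin 0 (Set.Ioi 0)) := by
      apply tendsto_nhdsWithin_of_tendsto_nhds_of_eventually_within
      · have := tendsto_pow_atTop_nhds_zero_of_lt_one
          (by norm_num : (0:ℝ) ≤ 1/2) (by norm_num : (1:ℝ)/2 < 1)
        have h2 := this.const_mul t₀
        simpa [div_eq_mul_inv, mul_comm, inv_pow] using h2
      · exact Filter.Eventually.of_forall fun n => Set.mem_Ioi.2 (by positivity)
    have h1 : Filter.Tendsto (fun n : ℕ => F (t₀ / 2 ^ n)) Filter.atTop (nhds 1) :=
      hlim.comp hseq
    have h2 : Filter.Tendsto (fun n : ℕ => F (t₀ / 2 ^ n)) Filter.atTop (nhds 0) := by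
      simp only [key]; exact tendsto_const_nhds
    exact one_ne_zero (tendsto_nhds_unique h1 h2)
  -- derivative of shifted function
  have hshift : ∀ s > 0, ∀ t > 0, D (s + t) = D s * F t := by
    intro s hs t ht
    have h1 : HasDerivAt (fun u => F (u + t)) (D (s + t)) s := by
      have := (hF' (s + t) (by positivity)).comp s ((hasDerivAt_id s).add_const t)
      exact this.congr_deriv (mul_one _)
    have h2 : HasDerivAt (fun u => F u * F t) (D s * F t) s :=
      (hF' s hs).mul_const (F t)
    have heq : (fun u => F (u + t)) =ᶠ[nhds s] fun u => F u * F t := by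
      filter_upwards [Ioi_mem_nhds hs] with u hu
      exact hmul u hu t ht
    exact (h1.congr_of_eventuallyEq heq.symm).unique h2
  have hsym : ∀ s > 0, ∀ t > 0, D s * F t = F s * D t := by
    intro s hs t ht
    have h1 := hshift s hs t ht
    have h2 := hshift t ht s hs
    rw [add_comm] at h2
    rw [h1] at h2; linarith [h2]
  set μ := D 1 / F 1 with hμ
  have hD : ∀ t > 0, D t = μ * F t := by
    intro t ht
    have := hsym 1 one_pos t ht
    rw [hμ, div_mul_eq_mul_div, eq_div_iff (hnz 1 one_pos)]
    linear_combination -this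
  -- W = F * exp(-μ t) constant on (0, ∞)
  set W : ℝ → ℝ := fun t => F t * Real.exp (-μ * t) with hW
  have hW' : ∀ t > 0, HasDerivAt W 0 t := by
    intro t ht
    have hexp : HasDerivAt (fun u => Real.exp (-μ * u)) (Real.exp (-μ * t) * (-μ)) t := by
      have : HasDerivAt (fun u : ℝ => -μ * u) (-μ) t := by
        simpa using (hasDerivAt_id t).const_mul (-μ)
      simpa using this.exp
    have := (hF' t ht).mul hexp
    rw [hD t ht] at this
    refine this.congr_deriv ?_
    ring
  have hconst : ∀ a > 0, ∀ b > 0, W a = W b := by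
    have key : ∀ a b : ℝ, 0 < a → a ≤ b → W b = W a := by
      intro a b ha hab
      have hcont : ContinuousOn W (Set.Icc a b) := fun x hx =>
        ((hW' x (lt_of_lt_of_le ha hx.1)).continuousAt).continuousWithinAt
      exact constant_of_has_deriv_right_zero hcont
        (fun x hx => ((hW' x (lt_of_lt_of_le ha hx.1)).hasDerivWithinAt)) b
        ⟨hab, le_refl b⟩
    intro a ha b hb
    rcases le_total a b with h | h
    · exact (key a b ha h).symm
    · exact key b a hb h
  set C := W 1 with hC
  have hFt : ∀ t > 0, F t = C * Real.exp (μ * t) := by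
    intro t ht
    have h1 : W t = C := hconst t ht 1 one_pos
    have h2 : F t * Real.exp (-μ * t) = C := h1
    have h3 : Real.exp (-μ * t) * Real.exp (μ * t) = 1 := by
      rw [← Real.exp_add]; ring_nf; exact Real.exp_zero
    calc F t = F t * (Real.exp (-μ * t) * Real.exp (μ * t)) := by rw [h3]; ring
      _ = C * Real.exp (μ * t) := by rw [← mul_assoc, h2]
  have hC1 : C = 1 := by
    have h1 := hmul 1 one_pos 1 one_pos
    rw [hFt 1 one_pos, hFt (1+1) (by norm_num)] at h1
    have he : Real.exp (μ * (1+1)) = Real.exp (μ * 1) * Real.exp (μ * 1) := by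
      rw [← Real.exp_add]; ring_nf
    rw [he] at h1
    have hCne : C ≠ 0 := by
      intro h
      exact hnz 1 one_pos (by rw [hFt 1 one_pos, h, zero_mul])
    have hexpne := Real.exp_ne_zero (μ * 1)
    have hq : C * C = C := by
      apply mul_right_cancel₀ (mul_ne_zero hexpne hexpne)
      nlinarith [h1]
    have := mul_left_cancel₀ hCne (show C * C = C * 1 by rw [mul_one]; exact hq)
    linarith
  exact ⟨μ, fun t ht => by rw [hFt t ht, hC1, one_mul]⟩

/-- Deterministic core of Theorem 2.1 (affine drift case): the first-moment identity
forced by the time-homogeneous Markov property implies that the kernel is exponential. -/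
theorem stmt_0
    (K E : ℝ → ℝ) (b0 β lam : ℝ) (D : Set ℝ) (hD : D.Nonempty)
    (hKc : ContinuousOn K (Set.Ioi 0))
    (hKL2 : ∀ T > 0, MeasureTheory.IntegrableOn (fun s => (K s) ^ 2) (Set.Ioc 0 T))
    (hEc : ContinuousOn E (Set.Ioi 0))
    (hEL2 : ∀ T > 0, MeasureTheory.IntegrableOn (fun s => (E s) ^ 2) (Set.Ioc 0 T))
    (hVolt : ∀ t > 0, E t = K t + β * ∫ s in (0:ℝ)..t, K (t - s) * E s)
    (E1 : ℝ → ℝ)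
    (hE1 : ∀ T : ℝ, E1 T = 1 + β * ∫ s in (0:ℝ)..T, Real.exp (lam * s) * E s)
    (hMain : ∀ x ∈ D, ∀ t T : ℝ, 0 < t → t < T →
      Real.exp (-lam * T) * E1 T * x + b0 * ∫ s in (0:ℝ)..T, E s
        = Real.exp (-lam * T) * E1 (T - t) * E1 t * x
          + b0 * Real.exp (-lam * (T - t)) * E1 (T - t) * (∫ s in (0:ℝ)..t, E s)
          + b0 * ∫ s in (0:ℝ)..(T - t), E s)
    (hne : b0 ≠ 0 ∨ β ≠ 0)
    (h1 : b0 = 0 → β ≠ 0 → ∃ x ∈ D, x ≠ 0)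
    (h2 : b0 ≠ 0 → β ≠ 0 → lam = 0 → (0:ℝ) ∈ D)
    (h3 : b0 ≠ 0 → β ≠ 0 → lam ≠ 0 → -b0 / β ∈ D) :
    ∃ c : ℝ, ∀ t > 0, K t = c * Real.exp (-lam * t) := by
  -- Setup: integrability and derivatives of the primitives
  have hEint : ∀ T > 0, MeasureTheory.IntegrableOn E (Set.Ioc 0 T) :=
    fun T hT => my_int_L1 hEc hEL2 hT
  set G : ℝ → ℝ := fun t => ∫ s in (0:ℝ)..t, E s with hGdef
  have hG' : ∀ t > 0, HasDerivAt G (E t) t := fun t ht => my_prim_deriv hEc hEint ht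
  set I : ℝ → ℝ := fun u => ∫ s in (0:ℝ)..u, Real.exp (lam * s) * E s with hIdef
  have hIc : ContinuousOn (fun s => Real.exp (lam * s) * E s) (Set.Ioi 0) :=
    (Real.continuous_exp.comp (continuous_const.mul continuous_id)).continuousOn.mul hEc
  have hIint : ∀ T > 0, MeasureTheory.IntegrableOn
      (fun s => Real.exp (lam * s) * E s) (Set.Ioc 0 T) := by
    intro T hT
    have heq : (fun s => Real.exp (lam * s) * E s) = fun s => E s * Real.exp (lam * s) :=
      funext fun s => mul_comm _ _
    rw [heq]
    exact my_int_mul_exp hEc hEL2 lam hT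
  have hI' : ∀ t > 0, HasDerivAt I (Real.exp (lam * t) * E t) t :=
    fun t ht => my_prim_deriv hIc hIint ht
  have hE1eq : E1 = fun T => 1 + β * I T := funext hE1
  have hE1' : ∀ t > 0, HasDerivAt E1 (β * (Real.exp (lam * t) * E t)) t := by
    intro t ht
    rw [hE1eq]
    exact ((hI' t ht).const_mul β).const_add 1
  set F : ℝ → ℝ := fun t => Real.exp (-lam * t) * E1 t with hFdef
  have hFD : ∀ t > 0, HasDerivAt F (-lam * F t + β * E t) t := by
    intro t ht
    have hexp : HasDerivAt (fun u => Real.exp (-lam * u)) (Real.exp (-lam * t) * (-lam)) t := by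
      simpa using ((hasDerivAt_id t).const_mul (-lam)).exp
    have h := hexp.mul (hE1' t ht)
    have hxx : Real.exp (-lam * t) * Real.exp (lam * t) = 1 := by
      rw [← Real.exp_add]; ring_nf; exact Real.exp_zero
    refine h.congr_deriv ?_
    simp only [hFdef]
    linear_combination (β * E t) * hxx
  have hFlim : Filter.Tendsto F (nhdsWithin 0 (Set.Ioi 0)) (nhds 1) := by
    have hI0 : Filter.Tendsto I (nhdsWithin 0 (Set.Ioi 0)) (nhds 0) := my_prim_tendsto hIint
    have hE1lim : Filter.Tendsto E1 (nhdsWithin 0 (Set.Ioi 0)) (nhds 1) := by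
      rw [hE1eq]
      simpa using (hI0.const_mul β).const_add 1
    have hexplim : Filter.Tendsto (fun u => Real.exp (-lam * u))
        (nhdsWithin 0 (Set.Ioi 0)) (nhds 1) := by
      have hcont : Continuous fun u : ℝ => Real.exp (-lam * u) :=
        Real.continuous_exp.comp (continuous_const.mul continuous_id)
      have := (hcont.tendsto 0).mono_left (nhdsWithin_le_nhds (s := Set.Ioi (0:ℝ)))
      simpa using this
    have h12 : (1:ℝ) * 1 = 1 := one_mul 1
    rw [hFdef, ← h12]
    exact hexplim.mul hE1lim
  -- The functional equation in (F, G) form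
  have hstar : ∀ x ∈ D, ∀ s > 0, ∀ t > 0,
      F (s + t) * x + b0 * G (s + t)
        = F s * F t * x + b0 * F s * G t + b0 * G s := by
    intro x hx s hs t ht
    have h := hMain x hx t (s + t) ht (by linarith)
    simp only [add_sub_cancel_right] at h
    have hexp : Real.exp (-lam * (s + t)) = Real.exp (-lam * s) * Real.exp (-lam * t) := by
      rw [← Real.exp_add]; ring_nf
    simp only [hFdef, hGdef]
    linear_combination h + (x * (E1 s * E1 t)) * hexp
  obtain ⟨x₀, hx₀⟩ := hD
  have hsym : ∀ s > 0, ∀ t > 0,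
      (F s - 1) * (b0 * G t) = (F t - 1) * (b0 * G s) := by
    intro s hs t ht
    have ha := hstar x₀ hx₀ s hs t ht
    have hb := hstar x₀ hx₀ t ht s hs
    rw [add_comm t s] at hb
    linear_combination hb - ha
  -- It suffices to show E is exponential with the right rate relation
  suffices h : ∃ c₁ μ : ℝ, β * c₁ = μ + lam ∧ ∀ s > 0, E s = c₁ * Real.exp (μ * s) by
    obtain ⟨c₁, μ, hβc, hEexp⟩ := h
    exact ⟨c₁, my_volterra_exp hKc hKL2 hβc hEexp hVolt⟩
  by_cases hβ : β = 0
  · -- β = 0 : then b0 ≠ 0 and E = K directly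
    have hb0 : b0 ≠ 0 := hne.resolve_right fun h => h hβ
    have hE1one : ∀ T, E1 T = 1 := fun T => by rw [hE1 T, hβ]; ring
    have hFexp : ∀ t, F t = Real.exp (-lam * t) := fun t => by
      simp only [hFdef]; rw [hE1one, mul_one]
    by_cases hlamz : lam = 0
    · -- G is additive, hence E is constant
      have hFone : ∀ u, F u = 1 := fun u => by rw [hFexp, hlamz]; simp
      have hGadd : ∀ s > 0, ∀ t > 0, G (s + t) = G s + G t := by
        intro s hs t ht
        have h := hstar x₀ hx₀ s hs t ht
        rw [hFone, hFone, hFone] at h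
        have h2 : b0 * G (s + t) = b0 * (G s + G t) := by linear_combination h
        exact mul_left_cancel₀ hb0 h2
      have hEconst : ∀ s > 0, ∀ t > 0, E (s + t) = E s := by
        intro s hs t ht
        have h1 : HasDerivAt (fun u => G (u + t)) (E (s + t)) s := by
          have := (hG' (s + t) (add_pos hs ht)).comp s ((hasDerivAt_id s).add_const t)
          exact this.congr_deriv (mul_one _)
        have h2 : HasDerivAt (fun u => G u + G t) (E s) s := (hG' s hs).add_const _
        have heq : (fun u => G (u + t)) =ᶠ[nhds s] fun u => G u + G t := by
          filter_upwards [Ioi_mem_nhds hs] with u hu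
          exact hGadd u hu t ht
        exact ((h2.congr_of_eventuallyEq heq).unique h1).symm
      refine ⟨E 1, 0, by rw [hβ, hlamz]; ring, ?_⟩
      intro s hs
      rw [zero_mul, Real.exp_zero, mul_one]
      rcases lt_trichotomy s 1 with h | h | h
      · have hc := hEconst s hs (1 - s) (by linarith)
        rw [show s + (1 - s) = 1 by ring] at hc
        exact hc.symm
      · rw [h]
      · have hc := hEconst 1 one_pos (s - 1) (by linarith)
        rw [show 1 + (s - 1) = s by ring] at hc
        exact hc
    · -- lam ≠ 0 : G t = c₃ (e^{-lam t} - 1)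
      have hF1ne : F 1 - 1 ≠ 0 := by
        rw [hFexp]
        intro h
        have h' : Real.exp (-lam * 1) = 1 := by linarith [h]
        rw [Real.exp_eq_one_iff] at h'
        exact hlamz (by linarith [h'])
      set c₃ := b0 * G 1 / (F 1 - 1) with hc₃
      have hGt : ∀ t > 0, b0 * G t = c₃ * (F t - 1) := by
        intro t ht
        have h := hsym 1 one_pos t ht
        rw [hc₃, div_mul_eq_mul_div, eq_div_iff hF1ne]
        linear_combination h
      refine ⟨c₃ * (-lam) / b0, -lam, by rw [hβ]; ring, ?_⟩
      intro t ht
      have h1 : HasDerivAt (fun u => b0 * G u) (b0 * E t) t := (hG' t ht).const_mul b0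
      have hexp : HasDerivAt (fun u => Real.exp (-lam * u))
          (Real.exp (-lam * t) * (-lam)) t := by
        simpa using ((hasDerivAt_id t).const_mul (-lam)).exp
      have h2 : HasDerivAt (fun u => c₃ * (F u - 1))
          (c₃ * (Real.exp (-lam * t) * (-lam))) t := by
        have h2' := (hexp.sub_const 1).const_mul c₃
        have heqF : (fun u => c₃ * (F u - 1)) = fun u => c₃ * (Real.exp (-lam * u) - 1) := by
          funext u; rw [hFexp]
        rw [heqF]
        exact h2'
      have heq : (fun u => b0 * G u) =ᶠ[nhds t] fun u => c₃ * (F u - 1) := by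
        filter_upwards [Ioi_mem_nhds ht] with u hu
        exact hGt u hu
      have h3 := (h1.congr_of_eventuallyEq heq.symm).unique h2
      rw [div_mul_eq_mul_div, eq_div_iff hb0]
      linear_combination h3
  · -- β ≠ 0
    have halt : (∀ s > 0, ∀ t > 0, F (s + t) = F s * F t) ∨ (∀ s > 0, E s = 0) := by
      by_cases hb0 : b0 = 0
      · -- b0 = 0 : multiplicativity is immediate from a nonzero x ∈ D
        obtain ⟨x, hx, hxne⟩ := h1 hb0 hβ
        left
        intro s hs t ht
        have h := hstar x hx s hs t ht
        rw [hb0] at h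
        have h2 : F (s + t) * x = (F s * F t) * x := by linear_combination h
        exact mul_right_cancel₀ hxne h2
      · -- b0 ≠ 0
        obtain ⟨x, hx, hxprop⟩ : ∃ x ∈ D, (lam = 0 ∧ x = 0) ∨ (lam ≠ 0 ∧ x = -b0 / β) := by
          by_cases hlamz : lam = 0
          · exact ⟨0, h2 hb0 hβ hlamz, Or.inl ⟨hlamz, rfl⟩⟩
          · exact ⟨-b0 / β, h3 hb0 hβ hlamz, Or.inr ⟨hlamz, rfl⟩⟩
        by_cases hF1 : ∀ t > 0, F t = 1
        · left
          intro s hs t ht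
          rw [hF1 _ (add_pos hs ht), hF1 _ hs, hF1 _ ht]; ring
        · push_neg at hF1
          obtain ⟨s₀, hs₀pos, hFs₀⟩ := hF1
          have hne' : F s₀ - 1 ≠ 0 := sub_ne_zero.2 hFs₀
          by_cases hψ0 : x * (F s₀ - 1) + b0 * G s₀ = 0
          · -- the degenerate branch : E vanishes identically
            right
            have hψall : ∀ t > 0, x * (F t - 1) + b0 * G t = 0 := by
              intro t ht
              have h := hsym s₀ hs₀pos t ht
              have hz : (F s₀ - 1) * (x * (F t - 1) + b0 * G t) = 0 := by
                linear_combination h + (F t - 1) * hψ0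
              exact (mul_eq_zero.mp hz).resolve_left hne'
            rcases hxprop with ⟨hlamz, hxval⟩ | ⟨hlamz, hxval⟩
            · -- lam = 0, x = 0 : G ≡ 0 hence E ≡ 0
              intro s hs
              have hG0 : ∀ t > 0, G t = 0 := by
                intro t ht
                have h := hψall t ht
                rw [hxval] at h
                have h2 : b0 * G t = 0 := by linear_combination h
                exact (mul_eq_zero.mp h2).resolve_left hb0
              have hd1 : HasDerivAt G (E s) s := hG' s hs
              have hd2 : HasDerivAt G 0 s := by
                apply (hasDerivAt_const s (0:ℝ)).congr_of_eventuallyEq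
                filter_upwards [Ioi_mem_nhds hs] with u hu
                exact hG0 u hu
              exact hd1.unique hd2
            · -- lam ≠ 0, x = -b0/β : F ≡ 0, hence E1 ≡ 0, hence E ≡ 0
              have hxne : x ≠ 0 := by
                rw [hxval]
                exact div_ne_zero (neg_ne_zero.2 hb0) hβ
              have hxβ : x * β = -b0 := by rw [hxval]; field_simp
              have hFzero : ∀ t > 0, F t = 0 := by
                intro t ht
                have hd1 : HasDerivAt (fun u => x * (F u - 1) + b0 * G u)
                    (x * (-lam * F t + β * E t) + b0 * E t) t :=
                  (((hFD t ht).sub_const 1).const_mul x).add ((hG' t ht).const_mul b0)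
                have hd2 : HasDerivAt (fun u => x * (F u - 1) + b0 * G u) 0 t := by
                  apply (hasDerivAt_const t (0:ℝ)).congr_of_eventuallyEq
                  filter_upwards [Ioi_mem_nhds ht] with u hu
                  exact hψall u hu
                have h3 := hd1.unique hd2
                have h4 : x * lam * F t = 0 := by
                  linear_combination -h3 + E t * hxβ
                exact (mul_eq_zero.mp h4).resolve_left (mul_ne_zero hxne hlamz)
              intro s hs
              have hE1zero : ∀ t > 0, E1 t = 0 := by
                intro t ht
                have h := hFzero t ht
                simp only [hFdef] at h
                exact (mul_eq_zero.mp h).resolve_left (Real.exp_ne_zero _)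
              have hd1 : HasDerivAt E1 (β * (Real.exp (lam * s) * E s)) s := hE1' s hs
              have hd2 : HasDerivAt E1 0 s := by
                apply (hasDerivAt_const s (0:ℝ)).congr_of_eventuallyEq
                filter_upwards [Ioi_mem_nhds hs] with u hu
                exact hE1zero u hu
              have h3 := hd1.unique hd2
              have h4 := (mul_eq_zero.mp h3).resolve_left hβ
              exact (mul_eq_zero.mp h4).resolve_left (Real.exp_ne_zero _)
          · -- nondegenerate : F is multiplicative
            left
            set c₂ := (x * (F s₀ - 1) + b0 * G s₀) / (F s₀ - 1) with hc₂
            have hc₂ne : c₂ ≠ 0 := div_ne_zero hψ0 hne'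
            have hψt : ∀ t > 0, x * (F t - 1) + b0 * G t = c₂ * (F t - 1) := by
              intro t ht
              have h := hsym s₀ hs₀pos t ht
              rw [hc₂, div_mul_eq_mul_div, eq_div_iff hne']
              linear_combination h
            intro s hs t ht
            have e1 := hψt (s + t) (add_pos hs ht)
            have e2 := hψt t ht
            have e3 := hψt s hs
            have h := hstar x hx s hs t ht
            have hz : c₂ * F (s + t) = c₂ * (F s * F t) := by
              linear_combination h - e1 + F s * e2 + e3
            exact mul_left_cancel₀ hc₂ne hz
    rcases halt with hmul | hE0
    · obtain ⟨μ, hFt⟩ := my_mult_exp hFD hmul hFlim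
      refine ⟨(μ + lam) / β, μ, by field_simp, ?_⟩
      intro t ht
      have hexp : HasDerivAt (fun u => Real.exp (μ * u)) (Real.exp (μ * t) * μ) t := by
        simpa using ((hasDerivAt_id t).const_mul μ).exp
      have heq : F =ᶠ[nhds t] fun u => Real.exp (μ * u) := by
        filter_upwards [Ioi_mem_nhds ht] with u hu
        exact hFt u hu
      have h2 : HasDerivAt F (Real.exp (μ * t) * μ) t :=
        hexp.congr_of_eventuallyEq heq
      have h3 := (hFD t ht).unique h2
      rw [hFt t ht] at h3
      rw [div_mul_eq_mul_div, eq_div_iff hβ]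
      linear_combination h3
    · exact ⟨0, -lam, by ring, fun s hs => by rw [hE0 s hs]; ring⟩
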